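/- Let Y_1,...,Y_p be independent with mean θ_i and variance V(θ_i)/τ_i, V quadratic as above, τ_i+ν_2>0. For fixed b∈[0,1]^p, define θ̂_i^{b,Ȳ} = (1−b_i)Y_i + b_i Ȳ with Ȳ = (1/p)Σ_j Y_j, and URE^G(b) = (1/p)Σ_i [b_i²(Y_i−Ȳ)² + (1−2(1−1/p)b_i)V(Y_i)/(τ_i+ν_2)]. Then E[URE^G(b)] equals the risk E[(1/p)Σ_i(θ̂_i^{b,Ȳ}−θ_i)²]. -/

import Mathlib

open MeasureTheory ProbabilityTheory Filter

/-- Product of two L² functions is integrable. -/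
lemma memℒp_two_integrable_mul {Ω : Type*} [MeasurableSpace Ω] {μ : Measure Ω}
    {f g : Ω → ℝ} (hf : MemLp f 2 μ) (hg : MemLp g 2 μ) :
    Integrable (fun ω => f ω * g ω) μ := by
  have h : (fun ω => f ω * g ω)
      = fun ω => (((f ω + g ω) ^ 2 - f ω ^ 2) - g ω ^ 2) * (1/2 : ℝ) := by
    funext ω; ring
  rw [h]
  exact (((hf.add hg).integrable_sq.sub hf.integrable_sq).sub hg.integrable_sq).mul_const _

/-- URE^G(b) is an unbiased estimate of the risk of the
grand-mean shrinkage estimator `θ̂ i = (1 - b i) * Y i + b i * Ȳ`. -/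
theorem stmt2 {Ω : Type*} [MeasurableSpace Ω] (μ : Measure Ω) [IsProbabilityMeasure μ]
    (p : ℕ) (hp : 0 < p) (Y : Fin p → Ω → ℝ) (θ τ : Fin p → ℝ) (ν0 ν1 ν2 : ℝ)
    (hind : iIndepFun Y μ)
    (hτ : ∀ i, 0 < τ i) (hτν : ∀ i, 0 < τ i + ν2)
    (hL2 : ∀ i, MemLp (Y i) 2 μ)
    (hmean : ∀ i, ∫ ω, Y i ω ∂μ = θ i)
    (hvar : ∀ i, variance (Y i) μ = (ν0 + ν1 * θ i + ν2 * θ i ^ 2) / τ i)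
    (b : Fin p → ℝ) (hb : ∀ i, b i ∈ Set.Icc (0:ℝ) 1) :
    ∫ ω, (1 / (p:ℝ)) * ∑ i, (b i ^ 2 * (Y i ω - (1 / (p:ℝ)) * ∑ j, Y j ω) ^ 2
        + (1 - 2 * (1 - 1 / (p:ℝ)) * b i)
            * ((ν0 + ν1 * Y i ω + ν2 * Y i ω ^ 2) / (τ i + ν2))) ∂μ
      = ∫ ω, (1 / (p:ℝ)) * ∑ i,
          (((1 - b i) * Y i ω + b i * ((1 / (p:ℝ)) * ∑ j, Y j ω)) - θ i) ^ 2 ∂μ := by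
  have hpR : (0:ℝ) < (p:ℝ) := by exact_mod_cast hp
  have hpne : ((p:ℝ)) ≠ 0 := ne_of_gt hpR
  -- the grand mean
  set W : Ω → ℝ := fun ω => (1 / (p:ℝ)) * ∑ j, Y j ω with hWdef
  have hWL2 : MemLp W 2 μ := by
    have h1 := memLp_finset_sum' (μ := μ) (p := 2) Finset.univ (f := fun j => Y j)
      (fun j _ => hL2 j)
    have h2 : (fun ω => ∑ j, Y j ω) = (∑ j, Y j : Ω → ℝ) := by
      funext ω; simp [Finset.sum_apply]
    have h3 : MemLp (fun ω => ∑ j, Y j ω) 2 μ := by rw [h2]; exact h1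
    simpa [hWdef] using h3.const_mul (1 / (p:ℝ))
  -- basic integrabilities
  have hIntY : ∀ i, Integrable (Y i) μ := fun i => (hL2 i).integrable one_le_two
  have hIntYY : ∀ i j, Integrable (fun ω => Y i ω * Y j ω) μ :=
    fun i j => memℒp_two_integrable_mul (hL2 i) (hL2 j)
  have hIntsq : ∀ i, Integrable (fun ω => Y i ω ^ 2) μ := fun i => (hL2 i).integrable_sq
  have hIntW : Integrable W μ := hWL2.integrable one_le_two
  have hIntYW : ∀ i, Integrable (fun ω => Y i ω * W ω) μ :=
    fun i => memℒp_two_integrable_mul (hL2 i) hWL2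
  have hIntdsq : ∀ i, Integrable (fun ω => (Y i ω - W ω) ^ 2) μ :=
    fun i => ((hL2 i).sub hWL2).integrable_sq
  -- key expectations
  have hWmean : ∫ ω, W ω ∂μ = (1 / (p:ℝ)) * ∑ j, θ j := by
    rw [hWdef, integral_const_mul, integral_finset_sum _ (fun j _ => hIntY j)]
    simp [hmean]
  have hsqmean : ∀ i, ∫ ω, Y i ω ^ 2 ∂μ = variance (Y i) μ + θ i ^ 2 := by
    intro i
    have h := variance_eq_sub (μ := μ) (hL2 i)
    have h2 : (μ[(Y i) ^ 2] : ℝ) = ∫ ω, Y i ω ^ 2 ∂μ := by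
      congr 1
    rw [h2, hmean] at h
    linarith
  have hYYmean : ∀ i j, i ≠ j → ∫ ω, Y i ω * Y j ω ∂μ = θ i * θ j := by
    intro i j hij
    have hInd : IndepFun (Y i) (Y j) μ := hind.indepFun hij
    have h := hInd.integral_mul_eq_mul_integral (hL2 i).aestronglyMeasurable (hL2 j).aestronglyMeasurable
    have h1 : integral μ (Y i * Y j) = ∫ ω, Y i ω * Y j ω ∂μ := rfl
    rw [h1, hmean, hmean] at h
    exact h
  have hYWmean : ∀ i, ∫ ω, Y i ω * W ω ∂μ
      = (1 / (p:ℝ)) * variance (Y i) μ + θ i * ((1 / (p:ℝ)) * ∑ j, θ j) := by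
    intro i
    have h1 : (fun ω => Y i ω * W ω)
        = fun ω => (1 / (p:ℝ)) * ∑ j, Y i ω * Y j ω := by
      funext ω
      simp only [hWdef, Finset.mul_sum]
      exact Finset.sum_congr rfl fun j _ => by ring
    rw [h1, integral_const_mul, integral_finset_sum _ (fun j _ => hIntYY i j)]
    have h2 : ∀ j, ∫ ω, Y i ω * Y j ω ∂μ
        = θ i * θ j + (if j = i then variance (Y i) μ else 0) := by
      intro j
      by_cases hji : j = i
      · subst hji
        have h3 : (fun ω => Y j ω * Y j ω) = fun ω => Y j ω ^ 2 := by funext ω; ring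
        rw [h3, hsqmean, if_pos rfl]; ring
      · rw [if_neg hji, hYYmean i j (fun h => hji h.symm)]; ring
    rw [Finset.sum_congr rfl (fun j _ => h2 j), Finset.sum_add_distrib,
      Finset.sum_ite_eq' Finset.univ i (fun _ => variance (Y i) μ)]
    simp only [Finset.mem_univ, if_pos]
    rw [← Finset.mul_sum]
    ring
  -- generic linear combination integral
  have key : ∀ (i : Fin p) (c1 c2 c3 c4 c5 c6 : ℝ),
      ∫ ω, (c1 * (Y i ω - W ω) ^ 2 + (c2 * Y i ω ^ 2 + (c3 * Y i ω
          + (c4 * (Y i ω * W ω) + (c5 * W ω + c6))))) ∂μ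
      = c1 * (∫ ω, (Y i ω - W ω) ^ 2 ∂μ)
        + (c2 * (variance (Y i) μ + θ i ^ 2) + (c3 * θ i
          + (c4 * ((1 / (p:ℝ)) * variance (Y i) μ + θ i * ((1 / (p:ℝ)) * ∑ j, θ j))
            + (c5 * ((1 / (p:ℝ)) * ∑ j, θ j) + c6)))) := by
    intro i c1 c2 c3 c4 c5 c6
    have g6 : Integrable (fun _ : Ω => c6) μ := integrable_const c6
    have g5 : Integrable (fun ω => c5 * W ω + c6) μ := (hIntW.const_mul c5).add g6
    have g4 : Integrable (fun ω => c4 * (Y i ω * W ω) + (c5 * W ω + c6)) μ :=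
      ((hIntYW i).const_mul c4).add g5
    have g3 : Integrable (fun ω => c3 * Y i ω + (c4 * (Y i ω * W ω) + (c5 * W ω + c6))) μ :=
      ((hIntY i).const_mul c3).add g4
    have g2 : Integrable (fun ω => c2 * Y i ω ^ 2
        + (c3 * Y i ω + (c4 * (Y i ω * W ω) + (c5 * W ω + c6)))) μ :=
      ((hIntsq i).const_mul c2).add g3
    calc ∫ ω, (c1 * (Y i ω - W ω) ^ 2 + (c2 * Y i ω ^ 2 + (c3 * Y i ω
            + (c4 * (Y i ω * W ω) + (c5 * W ω + c6))))) ∂μ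
        = (∫ ω, c1 * (Y i ω - W ω) ^ 2 ∂μ) + ∫ ω, (c2 * Y i ω ^ 2 + (c3 * Y i ω
            + (c4 * (Y i ω * W ω) + (c5 * W ω + c6)))) ∂μ :=
          integral_add ((hIntdsq i).const_mul c1) g2
      _ = (∫ ω, c1 * (Y i ω - W ω) ^ 2 ∂μ) + ((∫ ω, c2 * Y i ω ^ 2 ∂μ)
            + ∫ ω, (c3 * Y i ω + (c4 * (Y i ω * W ω) + (c5 * W ω + c6))) ∂μ) := by
          rw [integral_add ((hIntsq i).const_mul c2) g3]
      _ = (∫ ω, c1 * (Y i ω - W ω) ^ 2 ∂μ) + ((∫ ω, c2 * Y i ω ^ 2 ∂μ)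
            + ((∫ ω, c3 * Y i ω ∂μ)
              + ∫ ω, (c4 * (Y i ω * W ω) + (c5 * W ω + c6)) ∂μ)) := by
          rw [integral_add ((hIntY i).const_mul c3) g4]
      _ = (∫ ω, c1 * (Y i ω - W ω) ^ 2 ∂μ) + ((∫ ω, c2 * Y i ω ^ 2 ∂μ)
            + ((∫ ω, c3 * Y i ω ∂μ) + ((∫ ω, c4 * (Y i ω * W ω) ∂μ)
              + ∫ ω, (c5 * W ω + c6) ∂μ))) := by
          rw [integral_add ((hIntYW i).const_mul c4) g5]
      _ = (∫ ω, c1 * (Y i ω - W ω) ^ 2 ∂μ) + ((∫ ω, c2 * Y i ω ^ 2 ∂μ)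
            + ((∫ ω, c3 * Y i ω ∂μ) + ((∫ ω, c4 * (Y i ω * W ω) ∂μ)
              + ((∫ ω, c5 * W ω ∂μ) + ∫ ω, (c6 : ℝ) ∂μ)))) := by
          rw [integral_add (hIntW.const_mul c5) g6]
      _ = c1 * (∫ ω, (Y i ω - W ω) ^ 2 ∂μ)
            + (c2 * (variance (Y i) μ + θ i ^ 2) + (c3 * θ i
              + (c4 * ((1 / (p:ℝ)) * variance (Y i) μ + θ i * ((1 / (p:ℝ)) * ∑ j, θ j))
                + (c5 * ((1 / (p:ℝ)) * ∑ j, θ j) + c6)))) := by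
          rw [integral_const_mul, integral_const_mul, integral_const_mul, integral_const_mul,
            integral_const_mul, integral_const, hsqmean, hmean, hYWmean, hWmean]
          simp
  -- abbreviations
  set B : ℝ := (1 / (p:ℝ)) * ∑ j, θ j with hB
  -- per-index equality of integrals
  have main : ∀ i : Fin p,
      ∫ ω, (b i ^ 2 * (Y i ω - W ω) ^ 2
        + (1 - 2 * (1 - 1 / (p:ℝ)) * b i)
            * ((ν0 + ν1 * Y i ω + ν2 * Y i ω ^ 2) / (τ i + ν2))) ∂μ
      = ∫ ω, (((1 - b i) * Y i ω + b i * W ω) - θ i) ^ 2 ∂μ := by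
    intro i
    have hτne : τ i ≠ 0 := ne_of_gt (hτ i)
    have hτνne : τ i + ν2 ≠ 0 := ne_of_gt (hτν i)
    have hσ : ν0 + ν1 * θ i + ν2 * θ i ^ 2 = τ i * variance (Y i) μ := by
      rw [hvar i]; field_simp
    set c : ℝ := 1 - 2 * (1 - 1 / (p:ℝ)) * b i with hc
    have hL : (fun ω => b i ^ 2 * (Y i ω - W ω) ^ 2
        + c * ((ν0 + ν1 * Y i ω + ν2 * Y i ω ^ 2) / (τ i + ν2)))
        = fun ω => (b i ^ 2 * (Y i ω - W ω) ^ 2 + (c * ν2 / (τ i + ν2) * Y i ω ^ 2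
          + (c * ν1 / (τ i + ν2) * Y i ω + ((0:ℝ) * (Y i ω * W ω)
            + ((0:ℝ) * W ω + c * ν0 / (τ i + ν2)))))) := by
      funext ω; field_simp; ring
    have hR : (fun ω => (((1 - b i) * Y i ω + b i * W ω) - θ i) ^ 2)
        = fun ω => (b i ^ 2 * (Y i ω - W ω) ^ 2 + ((1 - 2 * b i) * Y i ω ^ 2
          + ((2 * b i * θ i - 2 * θ i) * Y i ω + ((2 * b i) * (Y i ω * W ω)
            + ((-2 * b i * θ i) * W ω + θ i ^ 2))))) := by
      funext ω; ring
    rw [hL, hR, key i _ _ _ _ _ _, key i _ _ _ _ _ _]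
    set Q : ℝ := ∫ ω, (Y i ω - W ω) ^ 2 ∂μ with hQ
    set v : ℝ := variance (Y i) μ with hv
    field_simp
    linear_combination ((1 - 2 * (1 - 1 / (p:ℝ)) * b i) * (p:ℝ)) * hσ
      + (2 * b i * v * (τ i + ν2)) * mul_inv_cancel₀ hpne
  -- assemble
  have hIntLHS : ∀ i : Fin p, Integrable (fun ω => b i ^ 2 * (Y i ω - W ω) ^ 2
      + (1 - 2 * (1 - 1 / (p:ℝ)) * b i)
          * ((ν0 + ν1 * Y i ω + ν2 * Y i ω ^ 2) / (τ i + ν2))) μ := by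
    intro i
    set c : ℝ := 1 - 2 * (1 - 1 / (p:ℝ)) * b i with hc
    have h : (fun ω => b i ^ 2 * (Y i ω - W ω) ^ 2
        + c * ((ν0 + ν1 * Y i ω + ν2 * Y i ω ^ 2) / (τ i + ν2)))
        = fun ω => (b i ^ 2 * (Y i ω - W ω) ^ 2 + (c * ν2 / (τ i + ν2) * Y i ω ^ 2
          + (c * ν1 / (τ i + ν2) * Y i ω + c * ν0 / (τ i + ν2)))) := by
      funext ω
      field_simp
      ring
    rw [h]
    exact ((hIntdsq i).const_mul _).add (((hIntsq i).const_mul _).add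
      (((hIntY i).const_mul _).add (integrable_const _)))
  have hIntRHS : ∀ i : Fin p,
      Integrable (fun ω => (((1 - b i) * Y i ω + b i * W ω) - θ i) ^ 2) μ := by
    intro i
    have h : (fun ω => (((1 - b i) * Y i ω + b i * W ω) - θ i) ^ 2)
        = fun ω => (b i ^ 2 * (Y i ω - W ω) ^ 2 + ((1 - 2 * b i) * Y i ω ^ 2
          + ((2 * b i * θ i - 2 * θ i) * Y i ω + ((2 * b i) * (Y i ω * W ω)
            + ((-2 * b i * θ i) * W ω + θ i ^ 2))))) := by
      funext ω; ring
    rw [h]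
    exact ((hIntdsq i).const_mul _).add (((hIntsq i).const_mul _).add
      (((hIntY i).const_mul _).add (((hIntYW i).const_mul _).add
        ((hIntW.const_mul _).add (integrable_const _)))))
  calc ∫ ω, (1 / (p:ℝ)) * ∑ i, (b i ^ 2 * (Y i ω - W ω) ^ 2
        + (1 - 2 * (1 - 1 / (p:ℝ)) * b i)
            * ((ν0 + ν1 * Y i ω + ν2 * Y i ω ^ 2) / (τ i + ν2))) ∂μ
      = (1 / (p:ℝ)) * ∑ i, ∫ ω, (b i ^ 2 * (Y i ω - W ω) ^ 2
        + (1 - 2 * (1 - 1 / (p:ℝ)) * b i)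
            * ((ν0 + ν1 * Y i ω + ν2 * Y i ω ^ 2) / (τ i + ν2))) ∂μ := by
        rw [integral_const_mul, integral_finset_sum _ (fun i _ => hIntLHS i)]
    _ = (1 / (p:ℝ)) * ∑ i, ∫ ω, (((1 - b i) * Y i ω + b i * W ω) - θ i) ^ 2 ∂μ := by
        rw [Finset.sum_congr rfl (fun i _ => main i)]
    _ = ∫ ω, (1 / (p:ℝ)) * ∑ i, (((1 - b i) * Y i ω + b i * W ω) - θ i) ^ 2 ∂μ := by
        rw [integral_const_mul, integral_finset_sum _ (fun i _ => hIntRHS i)]
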